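/- Fix m ∈ ℕ, an injective map N from the set of pairs {(a, b) : 1 ≤ a < b ≤ m} into the positive integers, and functions z_{ab} : ℝ → ℝ for a < b. Set ψ_K(τ) = √2 · K · cos(Kτ) for each positive integer K, and define the oscillatory inputs w_a(τ, t) = −Σ_{c=1}^{a−1} ψ_{N(c,a)}(τ) + Σ_{c=a+1}^m z_{ac}(t) ψ_{N(a,c)}(τ), which are 2π-periodic in τ. Then the averaged multinomial iterated integrals of w_1, …, w_m with period T = 2π satisfy, for every t: (i) Ū_{k⃗_a}(t) = 0 for each a ∈ {1, …, m}; (ii) Ū_{k⃗_{ab}}(t) = −z_{ab}(t) for each pair a < b; and (iii) Ū_{k⃗_{aa}}(t) = (1/2) ( (a − 1) + Σ_{c=a+1}^m z_{ac}(t)² ) for each a. -/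

import Mathlib

open scoped BigOperators Real

noncomputable section

/-- The averaged multinomial iterated integral
`Ū_{k_1,…,k_m}(t) = (1/(T k_1! ⋯ k_m!)) ∫_0^T Π_a (∫_0^s u_a(τ, t) dτ)^{k_a} ds`. -/
def avgIterInt (m : ℕ) (u : Fin m → ℝ → ℝ → ℝ) (T : ℝ) (k : Fin m → ℕ)
    (t : ℝ) : ℝ :=
  (T * ∏ a, (Nat.factorial (k a) : ℝ))⁻¹ *
    ∫ s in (0:ℝ)..T, ∏ a, (∫ τ in (0:ℝ)..s, u a τ t) ^ (k a)

/-- `ψ_K(τ) = √2 · K · cos(Kτ)`. -/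
def psiOsc (K : ℕ) (τ : ℝ) : ℝ := Real.sqrt 2 * (K : ℝ) * Real.cos ((K : ℝ) * τ)

/-- The oscillatory inputs
`w_a(τ, t) = −Σ_{c<a} ψ_{N(c,a)}(τ) + Σ_{c>a} z_{ac}(t) ψ_{N(a,c)}(τ)`. -/
def oscInput (m : ℕ) (N : Fin m → Fin m → ℕ) (z : Fin m → Fin m → ℝ → ℝ)
    (a : Fin m) (τ t : ℝ) : ℝ :=
  -(∑ c ∈ Finset.univ.filter (fun c => c < a), psiOsc (N c a) τ)
    + ∑ c ∈ Finset.univ.filter (fun c => a < c), z a c t * psiOsc (N a c) τ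

namespace AvgOscAux

open MeasureTheory

lemma continuous_psiOsc (K : ℕ) : Continuous (psiOsc K) := by
  unfold psiOsc; fun_prop

lemma integral_psiOsc (K : ℕ) (hK : 0 < K) (s : ℝ) :
    ∫ τ in (0:ℝ)..s, psiOsc K τ = Real.sqrt 2 * Real.sin ((K : ℝ) * s) := by
  have hK' : (K : ℝ) ≠ 0 := Nat.cast_ne_zero.mpr hK.ne'
  simp only [psiOsc, mul_assoc]
  rw [intervalIntegral.integral_const_mul, intervalIntegral.integral_const_mul,
    intervalIntegral.integral_comp_mul_left Real.cos hK']
  simp [integral_cos]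
  field_simp

lemma integral_sin_nat (K : ℕ) :
    (∫ s in (0:ℝ)..(2*π), Real.sin ((K:ℝ)*s)) = 0 := by
  rcases Nat.eq_zero_or_pos K with h | h
  · simp [h]
  · have hK' : (K : ℝ) ≠ 0 := Nat.cast_ne_zero.mpr h.ne'
    rw [intervalIntegral.integral_comp_mul_left Real.sin hK']
    simp [integral_sin, Real.cos_nat_mul_two_pi]

lemma integral_cos_int (n : ℤ) (hn : n ≠ 0) :
    (∫ s in (0:ℝ)..(2*π), Real.cos ((n:ℝ)*s)) = 0 := by
  have hn' : (n : ℝ) ≠ 0 := Int.cast_ne_zero.mpr hn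
  rw [intervalIntegral.integral_comp_mul_left Real.cos hn']
  have h : (n:ℝ) * (2*π) = ((2*n : ℤ) : ℝ) * π := by push_cast; ring
  rw [integral_cos, h, Real.sin_int_mul_pi]
  simp

lemma integral_sin_mul_sin (K L : ℕ) (hK : 0 < K) (hL : 0 < L) :
    (∫ s in (0:ℝ)..(2*π), Real.sin ((K:ℝ)*s) * Real.sin ((L:ℝ)*s))
      = if K = L then π else 0 := by
  have key : ∀ s : ℝ, Real.sin ((K:ℝ)*s) * Real.sin ((L:ℝ)*s)
      = Real.cos ((((K:ℤ) - L : ℤ) : ℝ) * s)/2 - Real.cos ((((K:ℤ) + L : ℤ) : ℝ) * s)/2 := by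
    intro s
    have h1 : (((K:ℤ) - L : ℤ) : ℝ) * s = (K:ℝ)*s - (L:ℝ)*s := by push_cast; ring
    have h2 : (((K:ℤ) + L : ℤ) : ℝ) * s = (K:ℝ)*s + (L:ℝ)*s := by push_cast; ring
    rw [h1, h2, Real.cos_sub, Real.cos_add]; ring
  have hcont : ∀ c : ℝ, IntervalIntegrable (fun s => Real.cos (c*s)/2) volume 0 (2*π) :=
    fun c => (by fun_prop : Continuous fun s => Real.cos (c*s)/2).intervalIntegrable _ _
  have hKL : ((K:ℤ) + L) ≠ 0 := by positivity
  simp only [key]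
  rw [intervalIntegral.integral_sub (hcont _) (hcont _)]
  have h2 : (∫ s in (0:ℝ)..(2*π), Real.cos ((((K:ℤ) + L : ℤ) : ℝ) * s)/2) = 0 := by
    rw [intervalIntegral.integral_div, integral_cos_int _ hKL, zero_div]
  rw [h2, sub_zero]
  by_cases h : K = L
  · subst h
    have h0 : ((K:ℤ) - K : ℤ) = 0 := by ring
    rw [if_pos rfl, h0]
    simp
    ring
  · have hne : ((K:ℤ) - L : ℤ) ≠ 0 := by
      intro hcon; exact h (by omega)
    rw [intervalIntegral.integral_div, integral_cos_int _ hne, zero_div, if_neg h]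

variable {m : ℕ}

def Sset (m : ℕ) (a : Fin m) : Finset (Fin m) := Finset.univ.filter (fun c => c ≠ a)

lemma mem_Sset {a c : Fin m} : c ∈ Sset m a ↔ c ≠ a := by simp [Sset]

def coefC (z : Fin m → Fin m → ℝ → ℝ) (t : ℝ) (a c : Fin m) : ℝ :=
  if c < a then -1 else z a c t

def freqF (N : Fin m → Fin m → ℕ) (a c : Fin m) : ℕ :=
  if c < a then N c a else N a c

lemma freq_pos (N : Fin m → Fin m → ℕ) (hNpos : ∀ a b : Fin m, a < b → 0 < N a b)
    {a c : Fin m} (hc : c ≠ a) : 0 < freqF N a c := by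
  unfold freqF
  rcases hc.lt_or_gt with h | h
  · rw [if_pos h]; exact hNpos c a h
  · rw [if_neg (not_lt.mpr h.le)]; exact hNpos a c h

lemma freq_match (N : Fin m → Fin m → ℕ)
    (hNinj : ∀ a b a' b' : Fin m, a < b → a' < b' → N a b = N a' b' → a = a' ∧ b = b')
    {a b c d : Fin m} (hc : c ≠ a) (hd : d ≠ b)
    (h : freqF N a c = freqF N b d) : (a = b ∧ c = d) ∨ (a = d ∧ c = b) := by
  unfold freqF at h
  rcases hc.lt_or_gt with h1 | h1 <;> rcases hd.lt_or_gt with h2 | h2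
  · rw [if_pos h1, if_pos h2] at h
    obtain ⟨e1, e2⟩ := hNinj c a d b h1 h2 h
    exact Or.inl ⟨e2, e1⟩
  · rw [if_pos h1, if_neg (not_lt.mpr h2.le)] at h
    obtain ⟨e1, e2⟩ := hNinj c a b d h1 h2 h
    exact Or.inr ⟨e2, e1⟩
  · rw [if_neg (not_lt.mpr h1.le), if_pos h2] at h
    obtain ⟨e1, e2⟩ := hNinj a c d b h1 h2 h
    exact Or.inr ⟨e1, e2⟩
  · rw [if_neg (not_lt.mpr h1.le), if_neg (not_lt.mpr h2.le)] at h
    obtain ⟨e1, e2⟩ := hNinj a c b d h1 h2 h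
    exact Or.inl ⟨e1, e2⟩

lemma W_eq (N : Fin m → Fin m → ℕ) (hNpos : ∀ a b : Fin m, a < b → 0 < N a b)
    (z : Fin m → Fin m → ℝ → ℝ) (t : ℝ) (a : Fin m) (s : ℝ) :
    (∫ τ in (0:ℝ)..s, oscInput m N z a τ t)
      = ∑ c ∈ Sset m a,
          coefC z t a c * (Real.sqrt 2 * Real.sin ((freqF N a c : ℝ) * s)) := by
  have hint1 : IntervalIntegrable
      (fun τ => -(∑ c ∈ Finset.univ.filter (fun c => c < a), psiOsc (N c a) τ))
      volume 0 s :=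
    ((continuous_finset_sum _ fun c _ => continuous_psiOsc _).neg).intervalIntegrable _ _
  have hint2 : IntervalIntegrable
      (fun τ => ∑ c ∈ Finset.univ.filter (fun c => a < c), z a c t * psiOsc (N a c) τ)
      volume 0 s :=
    (continuous_finset_sum _ fun c _ =>
      continuous_const.mul (continuous_psiOsc _)).intervalIntegrable _ _
  unfold oscInput
  rw [intervalIntegral.integral_add hint1 hint2, intervalIntegral.integral_neg,
    intervalIntegral.integral_finset_sum
      (fun c _ => (continuous_psiOsc _).intervalIntegrable _ _),
    intervalIntegral.integral_finset_sum (f := fun c τ => z a c t * psiOsc (N a c) τ)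
      (fun c _ => (continuous_const.mul (continuous_psiOsc _)).intervalIntegrable _ _)]
  simp only [intervalIntegral.integral_const_mul]
  have hL : ∀ c ∈ Finset.univ.filter (fun c : Fin m => c < a),
      (∫ τ in (0:ℝ)..s, psiOsc (N c a) τ) = Real.sqrt 2 * Real.sin ((N c a : ℝ) * s) := by
    intro c hc
    exact integral_psiOsc _ (hNpos c a (by simpa using hc)) s
  have hR : ∀ c ∈ Finset.univ.filter (fun c : Fin m => a < c),
      z a c t * (∫ τ in (0:ℝ)..s, psiOsc (N a c) τ)
        = z a c t * (Real.sqrt 2 * Real.sin ((N a c : ℝ) * s)) := by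
    intro c hc
    rw [integral_psiOsc _ (hNpos a c (by simpa using hc)) s]
  rw [Finset.sum_congr rfl hL, Finset.sum_congr rfl hR,
    ← Finset.sum_filter_add_sum_filter_not (Sset m a) (fun c => c < a)]
  have e1 : (Sset m a).filter (fun c => c < a) = Finset.univ.filter (fun c => c < a) := by
    ext c
    simp only [Sset, Finset.mem_filter, Finset.mem_univ, true_and]
    exact ⟨fun h => h.2, fun h => ⟨h.ne, h⟩⟩
  have e2 : (Sset m a).filter (fun c => ¬ c < a) = Finset.univ.filter (fun c => a < c) := by
    ext c
    simp only [Sset, Finset.mem_filter, Finset.mem_univ, true_and]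
    constructor
    · rintro ⟨h1, h2⟩; exact lt_of_le_of_ne (not_lt.mp h2) (Ne.symm h1)
    · intro h; exact ⟨h.ne', not_lt.mpr h.le⟩
  rw [e1, e2]
  have t1 : ∑ c ∈ Finset.univ.filter (fun c : Fin m => c < a),
      coefC z t a c * (Real.sqrt 2 * Real.sin ((freqF N a c : ℝ) * s))
    = ∑ c ∈ Finset.univ.filter (fun c : Fin m => c < a),
        -(Real.sqrt 2 * Real.sin ((N c a : ℝ) * s)) := by
    refine Finset.sum_congr rfl fun c hc => ?_
    have hc' : c < a := by simpa using hc
    simp [coefC, freqF, hc']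
  have t2 : ∑ c ∈ Finset.univ.filter (fun c : Fin m => a < c),
      coefC z t a c * (Real.sqrt 2 * Real.sin ((freqF N a c : ℝ) * s))
    = ∑ c ∈ Finset.univ.filter (fun c : Fin m => a < c),
        z a c t * (Real.sqrt 2 * Real.sin ((N a c : ℝ) * s)) := by
    refine Finset.sum_congr rfl fun c hc => ?_
    have hc' : a < c := by simpa using hc
    simp [coefC, freqF, not_lt.mpr hc'.le]
  rw [t1, t2, Finset.sum_neg_distrib]

lemma integral_W_mul_W (N : Fin m → Fin m → ℕ)
    (hNpos : ∀ a b : Fin m, a < b → 0 < N a b)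
    (z : Fin m → Fin m → ℝ → ℝ) (t : ℝ) (a b : Fin m) :
    (∫ s in (0:ℝ)..(2*π),
        (∑ c ∈ Sset m a, coefC z t a c * (Real.sqrt 2 * Real.sin ((freqF N a c : ℝ) * s))) *
        (∑ d ∈ Sset m b, coefC z t b d * (Real.sqrt 2 * Real.sin ((freqF N b d : ℝ) * s))))
    = ∑ c ∈ Sset m a, ∑ d ∈ Sset m b,
        coefC z t a c * coefC z t b d * 2 *
          (if freqF N a c = freqF N b d then π else 0) := by
  have h2 : Real.sqrt 2 * Real.sqrt 2 = 2 := Real.mul_self_sqrt (by norm_num)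
  have hexp : ∀ s : ℝ,
      (∑ c ∈ Sset m a, coefC z t a c * (Real.sqrt 2 * Real.sin ((freqF N a c : ℝ) * s))) *
      (∑ d ∈ Sset m b, coefC z t b d * (Real.sqrt 2 * Real.sin ((freqF N b d : ℝ) * s)))
      = ∑ c ∈ Sset m a, ∑ d ∈ Sset m b,
          (coefC z t a c * coefC z t b d * 2) *
            (Real.sin ((freqF N a c : ℝ) * s) * Real.sin ((freqF N b d : ℝ) * s)) := by
    intro s
    rw [Finset.sum_mul_sum]
    refine Finset.sum_congr rfl fun c _ => Finset.sum_congr rfl fun d _ => ?_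
    linear_combination (coefC z t a c * coefC z t b d *
      Real.sin ((freqF N a c : ℝ) * s) * Real.sin ((freqF N b d : ℝ) * s)) * h2
  simp only [hexp]
  rw [intervalIntegral.integral_finset_sum (fun c _ =>
    (continuous_finset_sum _ fun d _ => by fun_prop).intervalIntegrable (0:ℝ) (2*π))]
  refine Finset.sum_congr rfl fun c hc => ?_
  rw [intervalIntegral.integral_finset_sum (fun d _ => by
    exact (by fun_prop : Continuous fun s => (coefC z t a c * coefC z t b d * 2) *
      (Real.sin ((freqF N a c : ℝ) * s) * Real.sin ((freqF N b d : ℝ) * s))).intervalIntegrable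
      (0:ℝ) (2*π))]
  refine Finset.sum_congr rfl fun d hd => ?_
  rw [intervalIntegral.integral_const_mul,
    integral_sin_mul_sin _ _ (freq_pos N hNpos (mem_Sset.mp hc))
      (freq_pos N hNpos (mem_Sset.mp hd))]

lemma prod_pow_single (X : Fin m → ℝ) (a : Fin m) :
    (∏ b, X b ^ ((Pi.single a 1 : Fin m → ℕ) b)) = X a := by
  rw [Finset.prod_eq_single a (fun b _ hb => by simp [Pi.single_eq_of_ne hb])
    (by simp)]
  simp

lemma prod_pow_pair (X : Fin m → ℝ) (a b : Fin m) :
    (∏ c, X c ^ ((Pi.single a 1 + Pi.single b 1 : Fin m → ℕ) c)) = X a * X b := by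
  simp only [Pi.add_apply, pow_add, Finset.prod_mul_distrib, prod_pow_single]

lemma prod_fact_single (a : Fin m) :
    (∏ b, ((Nat.factorial ((Pi.single a 1 : Fin m → ℕ) b)) : ℝ)) = 1 :=
  Finset.prod_eq_one fun b _ => by
    rcases eq_or_ne b a with h | h
    · subst h; simp
    · simp [Pi.single_eq_of_ne h]

lemma prod_fact_pair (a b : Fin m) (hab : a ≠ b) :
    (∏ c, ((Nat.factorial ((Pi.single a 1 + Pi.single b 1 : Fin m → ℕ) c)) : ℝ)) = 1 := by
  refine Finset.prod_eq_one fun c _ => ?_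
  rcases eq_or_ne c a with h | h <;> rcases eq_or_ne c b with h' | h' <;>
    simp_all [Pi.single_eq_of_ne, Pi.single_eq_same]

lemma prod_fact_double (a : Fin m) :
    (∏ c, ((Nat.factorial ((Pi.single a 1 + Pi.single a 1 : Fin m → ℕ) c)) : ℝ)) = 2 := by
  rw [Finset.prod_eq_single a (fun c _ hc => by simp [Pi.single_eq_of_ne hc])
    (by simp)]
  simp [Nat.factorial]

lemma card_lt (a : Fin m) :
    (Finset.univ.filter (fun c : Fin m => c < a)).card = (a : ℕ) := by
  have : Finset.univ.filter (fun c : Fin m => c < a) = Finset.Iio a := by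
    ext c; simp
  rw [this, Fin.card_Iio]

end AvgOscAux

open AvgOscAux MeasureTheory

/-- for the oscillatory inputs built from the `ψ_K`'s via an
injective enumeration `N` of the pairs `a < b`, the averaged multinomial
iterated integrals (with period `2π`) satisfy `Ū_{k⃗_a} = 0`,
`Ū_{k⃗_{ab}} = −z_{ab}` for `a < b`, and
`Ū_{k⃗_{aa}} = (1/2)((a−1) + Σ_{c>a} z_{ac}²)`. -/
theorem avgIterInt_of_oscInputs (m : ℕ)
    (N : Fin m → Fin m → ℕ)
    (hNpos : ∀ a b : Fin m, a < b → 0 < N a b)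
    (hNinj : ∀ a b a' b' : Fin m, a < b → a' < b' →
      N a b = N a' b' → a = a' ∧ b = b')
    (z : Fin m → Fin m → ℝ → ℝ) (t : ℝ) :
    (∀ a : Fin m,
      avgIterInt m (oscInput m N z) (2 * π) (Pi.single a 1) t = 0) ∧
    (∀ a b : Fin m, a < b →
      avgIterInt m (oscInput m N z) (2 * π)
        (Pi.single a 1 + Pi.single b 1) t = -(z a b t)) ∧
    (∀ a : Fin m,
      avgIterInt m (oscInput m N z) (2 * π)
        (Pi.single a 1 + Pi.single a 1) t
      = (1/2) * (((a : ℕ) : ℝ)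
          + ∑ c ∈ Finset.univ.filter (fun c => a < c), (z a c t) ^ 2)) := by
  have hπ : π ≠ 0 := Real.pi_ne_zero
  refine ⟨?_, ?_, ?_⟩
  · -- first moment vanishes
    intro a
    unfold avgIterInt
    have h1 : ∀ s : ℝ,
        (∏ b, (∫ τ in (0:ℝ)..s, oscInput m N z b τ t) ^ ((Pi.single a 1 : Fin m → ℕ) b))
        = ∑ c ∈ Sset m a,
            coefC z t a c * (Real.sqrt 2 * Real.sin ((freqF N a c : ℝ) * s)) := by
      intro s; rw [prod_pow_single, W_eq N hNpos z t a s]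
    simp only [h1]
    rw [intervalIntegral.integral_finset_sum (fun c _ =>
      (by fun_prop : Continuous fun s =>
        coefC z t a c * (Real.sqrt 2 * Real.sin ((freqF N a c : ℝ) * s))).intervalIntegrable
        (0:ℝ) (2*π))]
    have : ∀ c ∈ Sset m a,
        (∫ s in (0:ℝ)..(2*π),
          coefC z t a c * (Real.sqrt 2 * Real.sin ((freqF N a c : ℝ) * s))) = 0 := by
      intro c _
      rw [intervalIntegral.integral_const_mul, intervalIntegral.integral_const_mul,
        integral_sin_nat]
      ring
    rw [Finset.sum_congr rfl this]
    simp
  · -- mixed second moment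
    intro a b hab
    unfold avgIterInt
    have h1 : ∀ s : ℝ,
        (∏ c, (∫ τ in (0:ℝ)..s, oscInput m N z c τ t)
          ^ ((Pi.single a 1 + Pi.single b 1 : Fin m → ℕ) c))
        = (∑ c ∈ Sset m a,
            coefC z t a c * (Real.sqrt 2 * Real.sin ((freqF N a c : ℝ) * s))) *
          (∑ d ∈ Sset m b,
            coefC z t b d * (Real.sqrt 2 * Real.sin ((freqF N b d : ℝ) * s))) := by
      intro s
      rw [prod_pow_pair, W_eq N hNpos z t a s, W_eq N hNpos z t b s]
    simp only [h1]
    rw [integral_W_mul_W N hNpos z t a b]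
    have hbmem : b ∈ Sset m a := mem_Sset.mpr hab.ne'
    have hamem : a ∈ Sset m b := mem_Sset.mpr hab.ne
    rw [Finset.sum_eq_single_of_mem b hbmem (fun c hc hcb => ?_)]
    · rw [Finset.sum_eq_single_of_mem a hamem (fun d hd hda => ?_)]
      · have hfe : freqF N a b = freqF N b a := by
          unfold freqF
          rw [if_neg (not_lt.mpr hab.le), if_pos hab]
        have hCab : coefC z t a b = z a b t := by
          unfold coefC; rw [if_neg (not_lt.mpr hab.le)]
        have hCba : coefC z t b a = -1 := by
          unfold coefC; rw [if_pos hab]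
        rw [hfe, if_pos rfl, hCab, hCba, prod_fact_pair a b hab.ne]
        have h2π : (2*π) ≠ 0 := by positivity
        field_simp
      · have hne : freqF N a b ≠ freqF N b d := by
          intro h
          rcases freq_match N hNinj hab.ne' (mem_Sset.mp hd) h with ⟨e1, _⟩ | ⟨e1, _⟩
          · exact hab.ne e1
          · exact hda e1.symm
        rw [if_neg hne, mul_zero]
    · refine Finset.sum_eq_zero fun d hd => ?_
      have hne : freqF N a c ≠ freqF N b d := by
        intro h
        rcases freq_match N hNinj (mem_Sset.mp hc) (mem_Sset.mp hd) h with
          ⟨e1, _⟩ | ⟨_, e2⟩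
        · exact hab.ne e1
        · exact hcb e2
      rw [if_neg hne, mul_zero]
  · -- diagonal second moment
    intro a
    unfold avgIterInt
    have h1 : ∀ s : ℝ,
        (∏ c, (∫ τ in (0:ℝ)..s, oscInput m N z c τ t)
          ^ ((Pi.single a 1 + Pi.single a 1 : Fin m → ℕ) c))
        = (∑ c ∈ Sset m a,
            coefC z t a c * (Real.sqrt 2 * Real.sin ((freqF N a c : ℝ) * s))) *
          (∑ d ∈ Sset m a,
            coefC z t a d * (Real.sqrt 2 * Real.sin ((freqF N a d : ℝ) * s))) := by
      intro s
      rw [prod_pow_pair, W_eq N hNpos z t a s]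
    simp only [h1]
    rw [integral_W_mul_W N hNpos z t a a]
    have hdiag : ∀ c ∈ Sset m a,
        (∑ d ∈ Sset m a, coefC z t a c * coefC z t a d * 2 *
          (if freqF N a c = freqF N a d then π else 0))
        = coefC z t a c ^ 2 * (2 * π) := by
      intro c hc
      rw [Finset.sum_eq_single_of_mem c hc (fun d hd hdc => ?_)]
      · rw [if_pos rfl]; ring
      · have hne : freqF N a c ≠ freqF N a d := by
          intro h
          rcases freq_match N hNinj (mem_Sset.mp hc) (mem_Sset.mp hd) h with
            ⟨_, e2⟩ | ⟨e1, _⟩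
          · exact hdc e2.symm
          · exact (mem_Sset.mp hd) e1.symm
        rw [if_neg hne, mul_zero]
    rw [Finset.sum_congr rfl hdiag]
    have hsplit : (∑ c ∈ Sset m a, coefC z t a c ^ 2 * (2*π))
        = (((a : ℕ) : ℝ)
            + ∑ c ∈ Finset.univ.filter (fun c => a < c), (z a c t) ^ 2) * (2*π) := by
      rw [← Finset.sum_filter_add_sum_filter_not (Sset m a) (fun c => c < a)]
      have e1 : (Sset m a).filter (fun c => c < a)
          = Finset.univ.filter (fun c => c < a) := by
        ext c
        simp only [Sset, Finset.mem_filter, Finset.mem_univ, true_and]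
        exact ⟨fun h => h.2, fun h => ⟨h.ne, h⟩⟩
      have e2 : (Sset m a).filter (fun c => ¬ c < a)
          = Finset.univ.filter (fun c => a < c) := by
        ext c
        simp only [Sset, Finset.mem_filter, Finset.mem_univ, true_and]
        constructor
        · rintro ⟨h1, h2⟩; exact lt_of_le_of_ne (not_lt.mp h2) (Ne.symm h1)
        · intro h; exact ⟨h.ne', not_lt.mpr h.le⟩
      rw [e1, e2]
      have t1 : ∑ c ∈ Finset.univ.filter (fun c : Fin m => c < a),
          coefC z t a c ^ 2 * (2*π)
        = ∑ c ∈ Finset.univ.filter (fun c : Fin m => c < a), (2*π) := by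
        refine Finset.sum_congr rfl fun c hc => ?_
        have hc' : c < a := by simpa using hc
        simp [coefC, hc']
      have t2 : ∑ c ∈ Finset.univ.filter (fun c : Fin m => a < c),
          coefC z t a c ^ 2 * (2*π)
        = ∑ c ∈ Finset.univ.filter (fun c : Fin m => a < c), (z a c t) ^ 2 * (2*π) := by
        refine Finset.sum_congr rfl fun c hc => ?_
        have hc' : a < c := by simpa using hc
        simp [coefC, not_lt.mpr hc'.le]
      rw [t1, t2, Finset.sum_const, card_lt, ← Finset.sum_mul]
      push_cast
      ring
    rw [hsplit, prod_fact_double]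
    have h2π : (2*π) ≠ 0 := by positivity
    field_simp

end
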